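/- Let a ∈ Z_{>0}, β the positive root of x² - ax - 1, α = -β^{-1}, and q ∈ Q ∩ (-1,1). The digit sequence (s_i)_{i≥0} produced by the ceiling-based algorithm (repeatedly applying ψ(x₃,x₂,x₁) = (x₃-(⌈x₁⌉-x₁), x₂+a(⌈x₁⌉-x₁), ⌈x₁⌉)) is eventually periodic, takes values in {0,…,a}, and satisfies Σ_{i≥0} s_i α^i = q. -/

import Mathlib

set_option maxHeartbeats 1000000 in
/-- Let a ∈ ℤ_{>0}, β the positive root of x² - ax - 1, α = -β⁻¹,
and q ∈ ℚ ∩ (-1,1).  The digit sequence (s_i)_{i≥0}, s_i = s⁽ⁱ⁺¹⁾ᵢ, produced by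
the ceiling-based algorithm (repeated application of
ψ(x₃,x₂,x₁) = (x₃-(⌈x₁⌉-x₁), x₂+a(⌈x₁⌉-x₁), ⌈x₁⌉)) takes integer values in
{0,…,a}, is eventually periodic, and satisfies Σ_{i≥0} s_i α^i = q. -/
theorem algorithm_output_eventually_periodic (a : ℕ) (ha : 0 < a) (β α : ℝ)
    (hβroot : β ^ 2 = a * β + 1) (hβpos : 0 < β) (hα : α = -β⁻¹)
    (q : ℚ) (hq1 : -1 < q) (hq2 : q < 1)
    (s : ℕ → ℕ → ℚ)
    (h0 : s 0 = fun j => if j = 0 then q else 0)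
    (hstep : ∀ i, s (i + 1) =
      Function.update (Function.update (Function.update (s i)
        i (⌈s i i⌉ : ℚ))
        (i + 1) (s i (i + 1) + a * ((⌈s i i⌉ : ℚ) - s i i)))
        (i + 2) (s i (i + 2) - ((⌈s i i⌉ : ℚ) - s i i))) :
    (∀ i : ℕ, ∃ d : ℤ, (d : ℚ) = s (i + 1) i ∧ 0 ≤ d ∧ d ≤ a) ∧
    (∃ N p : ℕ, 0 < p ∧ ∀ i, N ≤ i → s (i + p + 1) (i + p) = s (i + 1) i) ∧
    HasSum (fun i : ℕ => ((s (i + 1) i : ℚ) : ℝ) * α ^ i) (q : ℝ) := by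
  have haQ : (1:ℚ) ≤ (a:ℚ) := by exact_mod_cast ha
  -- structural lemmas
  have hzero : ∀ i j, i + 2 ≤ j → s i j = 0 := by
    intro i
    induction i with
    | zero => intro j hj; rw [h0]; simp only; rw [if_neg (by omega)]
    | succ i ih =>
      intro j hj
      rw [hstep i, Function.update_apply, if_neg (by omega), Function.update_apply,
        if_neg (by omega), Function.update_apply, if_neg (by omega)]
      exact ih j (by omega)
  have hL2 : ∀ i, s (i+1) i = (⌈s i i⌉ : ℚ) := by
    intro i
    rw [hstep i, Function.update_apply, if_neg (by omega), Function.update_apply,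
      if_neg (by omega), Function.update_apply, if_pos rfl]
  have hL3 : ∀ i, s (i+1) (i+1) = s i (i+1) + a * ((⌈s i i⌉:ℚ) - s i i) := by
    intro i
    rw [hstep i, Function.update_apply, if_neg (by omega), Function.update_apply, if_pos rfl]
  have hL4 : ∀ i, s (i+1) (i+2) = - ((⌈s i i⌉:ℚ) - s i i) := by
    intro i
    rw [hstep i, Function.update_apply, if_pos rfl, hzero i (i+2) le_rfl]
    ring
  have hε : ∀ i, (0:ℚ) ≤ (⌈s i i⌉:ℚ) - s i i ∧ (⌈s i i⌉:ℚ) - s i i < 1 := by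
    intro i
    refine ⟨by linarith [Int.le_ceil (s i i)], by linarith [Int.ceil_lt_add_one (s i i)]⟩
  -- bounds
  have hbound : ∀ i, (-1 < s i i ∧ s i i ≤ a) ∧ (-1 < s i (i+1) ∧ s i (i+1) ≤ 0) := by
    intro i
    induction i with
    | zero =>
      rw [h0]; norm_num
      refine ⟨hq1, by linarith⟩
    | succ i ih =>
      obtain ⟨⟨h1, h2⟩, h3, h4⟩ := ih
      obtain ⟨he1, he2⟩ := hε i
      have e1 := hL3 i
      have e2 := hL4 i
      constructor
      · rw [e1]
        constructor
        · nlinarith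
        · nlinarith
      · have e2' : s (i+1) (i+1+1) = -((⌈s i i⌉:ℚ) - s i i) := e2
        rw [e2']
        constructor <;> linarith
  -- digit bounds
  have hdig : ∀ i, (0:ℤ) ≤ ⌈s i i⌉ ∧ ⌈s i i⌉ ≤ (a:ℤ) := by
    intro i
    obtain ⟨⟨h1, h2⟩, -⟩ := hbound i
    constructor
    · have : (-1:ℤ) < ⌈s i i⌉ := Int.lt_ceil.mpr (by push_cast; linarith)
      omega
    · exact Int.ceil_le.mpr (by push_cast; linarith)
  -- denominators
  set D : ℤ := (q.den : ℤ) with hDdef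
  have hD : 0 < D := by positivity
  have hDQ : (0:ℚ) < (D:ℚ) := by exact_mod_cast hD
  have hden : ∀ i, (∃ m : ℤ, s i i * D = (m:ℚ)) ∧ (∃ n : ℤ, s i (i+1) * D = (n:ℚ)) := by
    intro i
    induction i with
    | zero =>
      rw [h0]; norm_num
      refine ⟨⟨q.num, ?_⟩, 0, by norm_num⟩
      push_cast
      rw [mul_comm]
      exact_mod_cast Rat.den_mul_eq_num q
    | succ i ih =>
      obtain ⟨⟨m, hm⟩, n, hn⟩ := ih
      constructor
      · refine ⟨n + a * (⌈s i i⌉ * D - m), ?_⟩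
        rw [hL3 i]
        push_cast
        linear_combination hn - (a:ℚ) * hm
      · refine ⟨-(⌈s i i⌉ * D - m), ?_⟩
        have e2 : s (i+1) (i+1+1) = -((⌈s i i⌉:ℚ) - s i i) := hL4 i
        rw [e2]
        push_cast
        linear_combination hm
  -- pigeonhole
  have key : ∃ i j : ℕ, i < j ∧ s i i = s j j ∧ s i (i+1) = s j (j+1) := by
    classical
    let T := Finset.Icc (-D) ((a:ℤ)*D) ×ˢ Finset.Icc (-D) (0:ℤ)
    have hmemT : ∀ i : ℕ, (⌈s i i * D⌉, ⌈s i (i+1) * D⌉) ∈ T := by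
      intro i
      obtain ⟨⟨h1, h2⟩, h3, h4⟩ := hbound i
      obtain ⟨⟨m, hm⟩, n, hn⟩ := hden i
      rw [Finset.mem_product, Finset.mem_Icc, Finset.mem_Icc, hm, hn,
        Int.ceil_intCast, Int.ceil_intCast]
      constructor
      · constructor
        · have : (-(D:ℚ)) ≤ (m:ℚ) := by rw [← hm]; nlinarith
          exact_mod_cast this
        · have : (m:ℚ) ≤ (a:ℚ) * D := by rw [← hm]; nlinarith
          exact_mod_cast this
      · constructor
        · have : (-(D:ℚ)) ≤ (n:ℚ) := by rw [← hn]; nlinarith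
          exact_mod_cast this
        · have : (n:ℚ) ≤ 0 := by rw [← hn]; nlinarith
          exact_mod_cast this
    let F : ℕ → {x // x ∈ T} := fun i => ⟨(⌈s i i * D⌉, ⌈s i (i+1) * D⌉), hmemT i⟩
    obtain ⟨i, j, hij, hFij⟩ := Finite.exists_ne_map_eq_of_infinite F
    have hcc : ⌈s i i * D⌉ = ⌈s j j * D⌉ ∧ ⌈s i (i+1) * D⌉ = ⌈s j (j+1) * D⌉ := by
      have := congrArg Subtype.val hFij
      exact ⟨congrArg Prod.fst this, congrArg Prod.snd this⟩
    have hrec : ∀ k : ℕ, ((⌈s k k * D⌉ : ℚ) = s k k * D) ∧ ((⌈s k (k+1) * D⌉ : ℚ) = s k (k+1) * D) := by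
      intro k
      obtain ⟨⟨m, hm⟩, n, hn⟩ := hden k
      rw [hm, hn, Int.ceil_intCast, Int.ceil_intCast]
      exact ⟨rfl, rfl⟩
    have huv : s i i = s j j ∧ s i (i+1) = s j (j+1) := by
      constructor
      · have h1 := (hrec i).1
        have h2 := (hrec j).1
        rw [hcc.1, h2] at h1
        exact mul_right_cancel₀ (ne_of_gt hDQ) h1.symm
      · have h1 := (hrec i).2
        have h2 := (hrec j).2
        rw [hcc.2, h2] at h1
        exact mul_right_cancel₀ (ne_of_gt hDQ) h1.symm
    rcases lt_or_gt_of_ne hij with h | h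
    · exact ⟨i, j, h, huv⟩
    · exact ⟨j, i, h, huv.1.symm, huv.2.symm⟩
  obtain ⟨N, j, hNj, hu0, hv0⟩ := key
  have hp : 0 < j - N := by omega
  set p := j - N with hpdef
  have hjeq : j = N + p := by omega
  rw [hjeq] at hu0 hv0
  have prop : ∀ k, s (N+k) (N+k) = s (N+k+p) (N+k+p) ∧
      s (N+k) (N+k+1) = s (N+k+p) (N+k+p+1) := by
    intro k
    induction k with
    | zero => exact ⟨hu0, hv0⟩
    | succ k ih =>
      have e1 := hL3 (N+k)
      have e2 := hL3 (N+k+p)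
      have e3 : s (N+k+1) (N+k+2) = -((⌈s (N+k) (N+k)⌉:ℚ) - s (N+k) (N+k)) := hL4 (N+k)
      have e4 : s (N+k+p+1) (N+k+p+2) = -((⌈s (N+k+p) (N+k+p)⌉:ℚ) - s (N+k+p) (N+k+p)) := hL4 (N+k+p)
      constructor
      · have g1 : s (N+(k+1)) (N+(k+1)) = s (N+k+1) (N+k+1) := by ring_nf
        have g2 : s (N+(k+1)+p) (N+(k+1)+p) = s (N+k+p+1) (N+k+p+1) := by ring_nf
        rw [g1, g2, e1, e2, ih.1, ih.2]
      · have g1 : s (N+(k+1)) (N+(k+1)+1) = s (N+k+1) (N+k+2) := by ring_nf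
        have g2 : s (N+(k+1)+p) (N+(k+1)+p+1) = s (N+k+p+1) (N+k+p+2) := by ring_nf
        rw [g1, g2, e3, e4, ih.1]
  -- assemble first two conjuncts
  refine ⟨?_, ⟨N, p, hp, ?_⟩, ?_⟩
  · intro i
    exact ⟨⌈s i i⌉, (hL2 i).symm, (hdig i).1, (hdig i).2⟩
  · intro i hi
    have hk := (prop (i - N)).1
    have hiN : N + (i - N) = i := by omega
    rw [hiN] at hk
    rw [hL2 (i+p), hL2 i]
    have : i + p = i + p := rfl
    rw [show s (i+p) (i+p) = s i i from by rw [← hk]]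
  -- HasSum
  have haR : (1:ℝ) ≤ (a:ℝ) := by exact_mod_cast ha
  have hβ1 : 1 < β := by
    nlinarith [hβroot, mul_le_mul_of_nonneg_right haR hβpos.le]
  have hαsq : α^2 = a * α + 1 := by
    rw [hα]
    have hβne : β ≠ 0 := ne_of_gt hβpos
    field_simp
    nlinarith [hβroot]
  have hαabs : |α| < 1 := by
    rw [hα, abs_neg, abs_inv, abs_of_pos hβpos]
    rw [inv_lt_one_iff₀]
    right; exact hβ1
  have hαnn : (0:ℝ) ≤ |α| := abs_nonneg α
  have hpart : ∀ n, ∑ k ∈ Finset.range n, ((s (k+1) k : ℚ):ℝ) * α^k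
      = (q:ℝ) - (s n n : ℝ) * α^n - (s n (n+1) : ℝ) * α^(n+1) := by
    intro n
    induction n with
    | zero =>
      rw [Finset.range_zero, Finset.sum_empty, h0]
      norm_num
    | succ n ih =>
      rw [Finset.sum_range_succ, ih, hL2 n]
      have e1 := hL3 n
      have e2 : s (n+1) (n+1+1) = -((⌈s n n⌉:ℚ) - s n n) := hL4 n
      rw [e1, e2]
      push_cast
      linear_combination (-((⌈s n n⌉:ℝ) - (s n n : ℝ)) * α^n) * hαsq
  have htail : Filter.Tendsto
      (fun n => ((s n n : ℚ):ℝ) * α^n + ((s n (n+1) : ℚ):ℝ) * α^(n+1))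
      Filter.atTop (nhds 0) := by
    apply squeeze_zero_norm (a := fun n => ((a:ℝ)+1) * |α|^n)
    · intro n
      obtain ⟨⟨h1, h2⟩, h3, h4⟩ := hbound n
      have hu : |((s n n : ℚ):ℝ)| ≤ (a:ℝ) := by
        rw [abs_le]
        constructor
        · have : (-1:ℝ) ≤ ((s n n : ℚ):ℝ) := by exact_mod_cast h1.le
          have ha1 : (1:ℝ) ≤ (a:ℝ) := by exact_mod_cast ha
          linarith
        · exact_mod_cast h2
      have hv : |((s n (n+1) : ℚ):ℝ)| ≤ 1 := by
        rw [abs_le]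
        constructor
        · exact_mod_cast h3.le
        · have : ((s n (n+1) : ℚ):ℝ) ≤ 0 := by exact_mod_cast h4
          linarith
      have hpow : |α|^(n+1) ≤ |α|^n := by
        rw [pow_succ]
        nlinarith [pow_nonneg hαnn n]
      calc ‖((s n n : ℚ):ℝ) * α^n + ((s n (n+1) : ℚ):ℝ) * α^(n+1)‖
          ≤ |((s n n : ℚ):ℝ) * α^n| + |((s n (n+1) : ℚ):ℝ) * α^(n+1)| := abs_add_le _ _
        _ ≤ (a:ℝ) * |α|^n + 1 * |α|^(n+1) := by
            rw [abs_mul, abs_mul, abs_pow, abs_pow]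
            gcongr
        _ ≤ ((a:ℝ)+1) * |α|^n := by
            have := pow_nonneg hαnn n
            nlinarith
    · have := (tendsto_pow_atTop_nhds_zero_of_lt_one hαnn hαabs).const_mul ((a:ℝ)+1)
      simpa using this
  have hsum_tendsto : Filter.Tendsto
      (fun n => ∑ k ∈ Finset.range n, ((s (k+1) k : ℚ):ℝ) * α^k)
      Filter.atTop (nhds (q:ℝ)) := by
    have h := (tendsto_const_nhds (x := (q:ℝ)) (f := Filter.atTop)).sub htail
    rw [sub_zero] at h
    refine h.congr ?_
    intro n
    rw [hpart n]
    ring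
  have hsummable : Summable (fun k : ℕ => ((s (k+1) k : ℚ):ℝ) * α^k) := by
    apply Summable.of_norm_bounded (g := fun k => (a:ℝ) * |α|^k)
      ((summable_geometric_of_lt_one hαnn hαabs).mul_left _)
    intro k
    rw [norm_mul, norm_pow]
    have h1 : ‖((s (k+1) k : ℚ):ℝ)‖ ≤ (a:ℝ) := by
      rw [hL2 k]
      rw [Real.norm_eq_abs, abs_le]
      obtain ⟨hd1, hd2⟩ := hdig k
      constructor
      · have : (0:ℝ) ≤ ((⌈s k k⌉:ℚ):ℝ) := by exact_mod_cast hd1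
        have ha1 : (0:ℝ) ≤ (a:ℝ) := by positivity
        linarith
      · exact_mod_cast hd2
    have h2 : ‖α‖^k = |α|^k := rfl
    rw [h2]
    have hpk : (0:ℝ) ≤ |α|^k := pow_nonneg hαnn k
    exact mul_le_mul_of_nonneg_right h1 hpk
  exact (hsummable.hasSum_iff_tendsto_nat).mpr hsum_tendsto
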